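/- Let f, g ∈ G satisfy f∘g = g∘f = e. Then f = (f⊣g)⊣f. (That is, the operadic R-transform k := f⊣f^{∘−1} of f satisfies the fixed-point equation f = k⊣f.) -/

import Mathlib

inductive PTree : Type where
  | node : List PTree → PTree

mutual
  def leavesT : PTree → ℕ
    | .node [] => 1
    | .node (t :: ts) => leavesT t + leavesL ts
  def leavesL : List PTree → ℕ
    | [] => 0
    | t :: ts => leavesT t + leavesL ts
end

inductive Reduced : PTree → Prop where
  | leaf : Reduced (.node [])
  | node : ∀ ts : List PTree, 2 ≤ ts.length → (∀ t ∈ ts, Reduced t) → Reduced (.node ts)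

mutual
  /-- Replace the leaves of a tree, from left to right, by the trees of a list;
  returns the resulting tree together with the unused trees of the list. -/
  def graftT : PTree → List PTree → PTree × List PTree
    | .node [], l => (l.headD (.node []), l.tail)
    | .node (c :: cs), l =>
        let p := graftL (c :: cs) l
        (.node p.1, p.2)
  def graftL : List PTree → List PTree → List PTree × List PTree
    | [], l => ([], l)
    | c :: cs, l =>
        let p := graftT c l
        let q := graftL cs p.2
        (p.1 :: q.1, q.2)
end

theorem graftT_nil (l : List PTree) : graftT (.node []) l = (l.headD (.node []), l.tail) := by
  simp [graftT]

theorem graftL_nil (l : List PTree) : graftL [] l = ([], l) := by simp [graftL]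

theorem graftL_cons (c : PTree) (cs l : List PTree) :
    graftL (c :: cs) l = ((graftT c l).1 :: (graftL cs (graftT c l).2).1,
      (graftL cs (graftT c l).2).2) := by
  simp [graftL]

theorem graftT_node_cons (c : PTree) (cs l : List PTree) :
    graftT (.node (c :: cs)) l = (.node (graftL (c :: cs) l).1, (graftL (c :: cs) l).2) := by
  simp [graftT]

theorem leavesT_node_cons (c : PTree) (cs : List PTree) :
    leavesT (.node (c :: cs)) = leavesL (c :: cs) := by simp [leavesT, leavesL]

theorem leavesL_cons (c : PTree) (cs : List PTree) :
    leavesL (c :: cs) = leavesT c + leavesL cs := by simp [leavesL]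

theorem leavesT_pos : ∀ t, 1 ≤ leavesT t
  | .node [] => le_refl 1
  | .node (c::cs) => by
      have := leavesT_pos c
      simp only [leavesT]; omega

theorem leavesL_append : ∀ a b : List PTree, leavesL (a ++ b) = leavesL a + leavesL b
  | [], b => by simp [leavesL]
  | c :: cs, b => by
      simp only [List.cons_append, leavesL, List.append_eq, leavesL_append cs b]; omega

mutual
theorem graftT_exact : ∀ (t : PTree) (l m : List PTree), leavesT t = l.length →
    graftT t (l ++ m) = ((graftT t l).1, m)
  | .node [], l, m, h => by
      match l, h with
      | [x], _ => simp [graftT]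
  | .node (c :: cs), l, m, h => by
      have h' : leavesL (c :: cs) = l.length := by
        simpa only [leavesT, leavesL] using h
      have := graftL_exact (c :: cs) l m h'
      simp only [graftT, this]
theorem graftL_exact : ∀ (cs : List PTree) (l m : List PTree), leavesL cs = l.length →
    graftL cs (l ++ m) = ((graftL cs l).1, m)
  | [], l, m, h => by
      match l, (by simpa [leavesL] using h : (0:ℕ) = l.length) with
      | [], _ => simp [graftL]
  | c :: cs, l, m, h => by
      have hc : leavesT c ≤ l.length := by
        simp only [leavesL] at h
        omega
      obtain ⟨l₁, l₂, rfl, h1, h2⟩ : ∃ l₁ l₂, l = l₁ ++ l₂ ∧ leavesT c = l₁.length ∧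
          leavesL cs = l₂.length := by
        refine ⟨l.take (leavesT c), l.drop (leavesT c), (List.take_append_drop _ _).symm, ?_, ?_⟩
        · simp [List.length_take]; omega
        · simp only [leavesL, List.length_append] at h ⊢
          simp [List.length_drop]; omega
      have e1 : graftT c (l₁ ++ (l₂ ++ m)) = ((graftT c l₁).1, l₂ ++ m) :=
        graftT_exact c l₁ (l₂ ++ m) h1
      have e1' : graftT c (l₁ ++ l₂) = ((graftT c l₁).1, l₂) := graftT_exact c l₁ l₂ h1
      have e2 : graftL cs (l₂ ++ m) = ((graftL cs l₂).1, m) := graftL_exact cs l₂ m h2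
      simp only [graftL, List.append_assoc, e1, e1', e2]
end

theorem length_graftL_fst : ∀ (cs l : List PTree), (graftL cs l).1.length = cs.length
  | [], l => by simp [graftL]
  | c :: cs, l => by
      simp only [graftL, List.length_cons, length_graftL_fst cs]

theorem graftL_append_fst : ∀ (a b m : List PTree),
    graftL (a ++ b) m = ((graftL a m).1 ++ (graftL b (graftL a m).2).1,
      (graftL b (graftL a m).2).2)
  | [], b, m => by simp [graftL]
  | c :: cs, b, m => by
      simp only [List.cons_append, graftL_cons, graftL_append_fst cs b]

mutual
theorem leavesT_graftT : ∀ (t : PTree) (l : List PTree), leavesT t = l.length →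
    leavesT (graftT t l).1 = leavesL l
  | .node [], l, h => by
      match l, h with
      | [x], _ => simp [graftT, leavesL]
  | .node (c :: cs), l, h => by
      have h' : leavesL (c :: cs) = l.length := by simpa only [leavesT, leavesL] using h
      have e := leavesL_graftL (c :: cs) l h'
      rw [graftT_node_cons]
      rw [graftL_cons] at e ⊢
      simp only [leavesT_node_cons, leavesL_cons] at e ⊢
      exact e
theorem leavesL_graftL : ∀ (cs l : List PTree), leavesL cs = l.length →
    leavesL (graftL cs l).1 = leavesL l
  | [], l, h => by
      match l, (by simpa [leavesL] using h : (0:ℕ) = l.length) with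
      | [], _ => simp [graftL, leavesL]
  | c :: cs, l, h => by
      obtain ⟨l₁, l₂, rfl, h1, h2⟩ : ∃ l₁ l₂, l = l₁ ++ l₂ ∧ leavesT c = l₁.length ∧
          leavesL cs = l₂.length := by
        refine ⟨l.take (leavesT c), l.drop (leavesT c), (List.take_append_drop _ _).symm, ?_, ?_⟩
        · simp only [leavesL, List.length] at h
          simp [List.length_take]; omega
        · simp only [leavesL, List.length] at h
          simp [List.length_drop]; omega
      have e1 : graftT c (l₁ ++ l₂) = ((graftT c l₁).1, l₂) := graftT_exact c l₁ l₂ h1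
      simp only [graftL, e1, leavesL, leavesT_graftT c l₁ h1, leavesL_graftL cs l₂ h2,
        leavesL_append]
end

mutual
theorem graftT_id : ∀ t : PTree, graftT t (List.replicate (leavesT t) (.node [])) = (t, [])
  | .node [] => by simp [graftT, leavesT]
  | .node (c :: cs) => by
      rw [leavesT_node_cons, graftT_node_cons, graftL_id (c :: cs)]
theorem graftL_id : ∀ cs : List PTree, graftL cs (List.replicate (leavesL cs) (.node [])) = (cs, [])
  | [] => by simp [graftL, leavesL]
  | c :: cs => by
      have hrep : List.replicate (leavesL (c :: cs)) (PTree.node []) =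
          List.replicate (leavesT c) (.node []) ++ List.replicate (leavesL cs) (.node []) := by
        simp only [leavesL]
        rw [List.replicate_add]
      rw [hrep]
      have e1 := graftT_exact c (List.replicate (leavesT c) (.node []))
        (List.replicate (leavesL cs) (.node [])) (by simp)
      simp only [graftL, e1, graftT_id c, graftL_id cs]
end

mutual
theorem graftT_assoc : ∀ (t : PTree) (l m : List PTree), leavesT t = l.length →
    graftT (graftT t l).1 m = ((graftT t (graftL l m).1).1, (graftL l m).2)
  | .node [], l, m, h => by
      match l, h with
      | [x], _ =>
        simp only [graftT_nil, List.headD, List.tail, graftL_cons, graftL_nil]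
  | .node (c :: cs), l, m, h => by
      have h' : leavesL (c :: cs) = l.length := by
        simpa only [leavesT_node_cons] using h
      have key := graftL_assoc (c :: cs) l m h'
      rw [graftT_node_cons, graftT_node_cons]
      dsimp only
      rw [graftL_cons c cs l] at key ⊢
      rw [graftT_node_cons, key]
theorem graftL_assoc : ∀ (cs l m : List PTree), leavesL cs = l.length →
    graftL (graftL cs l).1 m = ((graftL cs (graftL l m).1).1, (graftL l m).2)
  | [], l, m, h => by
      match l, (by simpa [leavesL] using h : (0:ℕ) = l.length) with
      | [], _ => simp [graftL_nil]
  | c :: cs, l, m, h => by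
      obtain ⟨l₁, l₂, rfl, h1, h2⟩ : ∃ l₁ l₂, l = l₁ ++ l₂ ∧ leavesT c = l₁.length ∧
          leavesL cs = l₂.length := by
        refine ⟨l.take (leavesT c), l.drop (leavesT c), (List.take_append_drop _ _).symm, ?_, ?_⟩
        · simp only [leavesL_cons, List.length_append] at h
          simp [List.length_take]; omega
        · simp only [leavesL_cons, List.length_append] at h
          simp [List.length_drop]; omega
      -- LHS
      have e1 : graftT c (l₁ ++ l₂) = ((graftT c l₁).1, l₂) := graftT_exact c l₁ l₂ h1
      rw [graftL_cons, e1]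
      rw [graftL_cons ((graftT c l₁).1)]
      rw [graftT_assoc c l₁ m h1]
      rw [graftL_assoc cs l₂ ((graftL l₁ m).2) h2]
      -- RHS
      rw [graftL_append_fst l₁ l₂ m]
      have hlen : leavesT c = (graftL l₁ m).1.length := by
        rw [length_graftL_fst]; exact h1
      have e2 : graftT c ((graftL l₁ m).1 ++ (graftL l₂ (graftL l₁ m).2).1) =
          ((graftT c (graftL l₁ m).1).1, (graftL l₂ (graftL l₁ m).2).1) :=
        graftT_exact c _ _ hlen
      rw [graftL_cons c, e2]
end

mutual
theorem reduced_graftT : ∀ (t : PTree) (l : List PTree), Reduced t → (∀ s ∈ l, Reduced s) →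
    Reduced (graftT t l).1 ∧ ∀ s ∈ (graftT t l).2, Reduced s
  | .node [], l, _, hl => by
      rw [graftT_nil]
      constructor
      · rcases l with _ | ⟨x, xs⟩
        · exact Reduced.leaf
        · exact hl x (by simp)
      · intro s hs
        exact hl s (List.mem_of_mem_tail hs)
  | .node (c :: cs), l, ht, hl => by
      have hred : ∀ s ∈ (c :: cs), Reduced s := by
        cases ht with
        | node ts h2 hall => exact hall
      have hlen : 2 ≤ (c :: cs).length := by
        cases ht with
        | node ts h2 hall => exact h2
      obtain ⟨ha, hb⟩ := reduced_graftL (c :: cs) l hred hl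
      rw [graftT_node_cons]
      refine ⟨Reduced.node _ ?_ ha, hb⟩
      rw [length_graftL_fst]; exact hlen
theorem reduced_graftL : ∀ (cs l : List PTree), (∀ c ∈ cs, Reduced c) → (∀ s ∈ l, Reduced s) →
    (∀ s ∈ (graftL cs l).1, Reduced s) ∧ ∀ s ∈ (graftL cs l).2, Reduced s
  | [], l, _, hl => by
      rw [graftL_nil]
      exact ⟨by simp, hl⟩
  | c :: cs, l, hcs, hl => by
      obtain ⟨h1, h2⟩ := reduced_graftT c l (hcs c (by simp)) hl
      obtain ⟨h3, h4⟩ := reduced_graftL cs (graftT c l).2 (fun x hx => hcs x (by simp [hx])) h2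
      rw [graftL_cons]
      refine ⟨?_, h4⟩
      intro s hs
      rcases List.mem_cons.1 hs with rfl | hs
      · exact h1
      · exact h3 s hs
end

mutual
def decompsT : PTree → List (PTree × List PTree)
  | .node [] => [(.node [], [.node []])]
  | .node (c :: cs) =>
      (.node [], [.node (c :: cs)]) ::
        (decompsL (c :: cs)).map fun p => (.node p.1, p.2)
def decompsL : List PTree → List (List PTree × List PTree)
  | [] => [([], [])]
  | c :: cs => (decompsT c).flatMap fun p => (decompsL cs).map fun q => (p.1 :: q.1, p.2 ++ q.2)
end

theorem decompsT_head : ∀ t : PTree, (.node [], [t]) ∈ decompsT t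
  | .node [] => by simp [decompsT]
  | .node (c :: cs) => by simp [decompsT]

theorem decompsT_node_cons (c : PTree) (cs : List PTree) :
    decompsT (.node (c :: cs)) = (.node [], [.node (c :: cs)]) ::
      (decompsL (c :: cs)).map (fun p => (.node p.1, p.2)) := by
  simp [decompsT]

theorem decompsL_cons (c : PTree) (cs : List PTree) :
    decompsL (c :: cs) = (decompsT c).flatMap
      fun p => (decompsL cs).map fun q => (p.1 :: q.1, p.2 ++ q.2) := by
  simp [decompsL]

mutual
theorem mem_decompsT : ∀ (t₀ : PTree) (l : List PTree) (t : PTree),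
    leavesT t₀ = l.length → (graftT t₀ l).1 = t → (t₀, l) ∈ decompsT t
  | .node [], l, t, h, hg => by
      match l, h with
      | [x], _ =>
        rw [graftT_nil] at hg
        simp only [List.headD] at hg
        subst hg
        exact decompsT_head x
  | .node (c :: cs), l, t, h, hg => by
      rw [graftT_node_cons] at hg
      dsimp only at hg
      subst hg
      have h' : leavesL (c :: cs) = l.length := by simpa only [leavesT_node_cons] using h
      have hm := mem_decompsL (c :: cs) l _ h' rfl
      rw [graftL_cons, decompsT_node_cons]
      rw [graftL_cons] at hm
      apply List.mem_cons_of_mem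
      exact List.mem_map.2 ⟨(c :: cs, l), hm, rfl⟩
theorem mem_decompsL : ∀ (cs l : List PTree) (ts : List PTree),
    leavesL cs = l.length → (graftL cs l).1 = ts → (cs, l) ∈ decompsL ts
  | [], l, ts, h, hg => by
      match l, (by simpa [leavesL] using h : (0:ℕ) = l.length) with
      | [], _ =>
        rw [graftL_nil] at hg
        subst hg
        simp [decompsL]
  | c :: cs, l, ts, h, hg => by
      obtain ⟨l₁, l₂, rfl, h1, h2⟩ : ∃ l₁ l₂, l = l₁ ++ l₂ ∧ leavesT c = l₁.length ∧
          leavesL cs = l₂.length := by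
        refine ⟨l.take (leavesT c), l.drop (leavesT c), (List.take_append_drop _ _).symm, ?_, ?_⟩
        · simp only [leavesL_cons, List.length_append] at h
          simp [List.length_take]; omega
        · simp only [leavesL_cons, List.length_append] at h
          simp [List.length_drop]; omega
      have e1 : graftT c (l₁ ++ l₂) = ((graftT c l₁).1, l₂) := graftT_exact c l₁ l₂ h1
      rw [graftL_cons, e1] at hg
      dsimp only at hg
      subst hg
      have m1 := mem_decompsT c l₁ _ h1 rfl
      have m2 := mem_decompsL cs l₂ _ h2 rfl
      rw [decompsL_cons]
      exact List.mem_flatMap.2 ⟨(c, l₁), m1, List.mem_map.2 ⟨(cs, l₂), m2, rfl⟩⟩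
end

/-- Schröder trees. -/
def SchT : Type := {t : PTree // Reduced t}

attribute [reducible] SchT

def leafST : SchT := ⟨.node [], Reduced.leaf⟩

/-- Decompositions `t = t₀ ∘ (t₁, …, t_n)` of a Schröder tree, where `t₀` has `n`
leaves. -/
def Decomps (t : SchT) : Set (SchT × List SchT) :=
  {p | (p.2.map Subtype.val).length = leavesT p.1.val ∧
    (graftT p.1.val (p.2.map Subtype.val)).1 = t.val}

/-- The composition product of the group of the Schröder operad:
`(f∘g)(t) = Σ f(t₀)·g(t₁)⋯g(t_n)` over all decompositions `t = t₀∘(t₁,…,t_n)`. -/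
noncomputable def compG (f g : SchT → ℚ) : SchT → ℚ :=
  fun t => ∑ᶠ p ∈ Decomps t, f p.1 * (p.2.map g).prod

/-- `(f⊣g)(t) = Σ f(t₀)·g(t₁)⋯g(t_{n−1})` over decompositions whose last entry is
the leaf. -/
noncomputable def ldash (f g : SchT → ℚ) : SchT → ℚ :=
  fun t => ∑ᶠ p ∈ {p | p ∈ Decomps t ∧ p.2.getLast? = some leafST},
    f p.1 * (p.2.dropLast.map g).prod

/-- `(f⊢g)(t) = Σ f(t₀)·g(t_n)` over decompositions whose entries `t₁,…,t_{n−1}`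
are all leaves. -/
noncomputable def rdash (f g : SchT → ℚ) : SchT → ℚ :=
  fun t => ∑ᶠ p ∈ {p | p ∈ Decomps t ∧ ∀ s ∈ p.2.dropLast, s = leafST},
    f p.1 * g (p.2.getLastD leafST)

/-- The identity element: the indicator function of the leaf. -/
def eG : SchT → ℚ := fun t =>
  match t.val with
  | .node [] => 1
  | _ => 0

theorem SchT.val_injective : Function.Injective (Subtype.val : SchT → PTree) :=
  fun _ _ h => Subtype.ext h

theorem SchT.list_injective : Function.Injective (List.map (Subtype.val : SchT → PTree)) :=
  List.map_injective_iff.2 SchT.val_injective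

/-- The set of decompositions of a Schröder tree is finite. -/
theorem decomps_finite (t : SchT) : (Decomps t).Finite := by
  have hsub : Decomps t ⊆
      (fun p : SchT × List SchT => (p.1.val, p.2.map Subtype.val)) ⁻¹'
        {x | x ∈ decompsT t.val} := by
    rintro ⟨t₀, l⟩ ⟨h1, h2⟩
    exact mem_decompsT t₀.val (l.map Subtype.val) t.val h1.symm h2
  refine Set.Finite.subset (Set.Finite.preimage ?_ (List.finite_toSet _)) hsub
  intro a _ b _ hab
  obtain ⟨h1, h2⟩ := Prod.mk.injEq _ _ _ _ ▸ hab
  exact Prod.ext (SchT.val_injective h1) (SchT.list_injective h2)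

/-- The set indexing `ldash`. -/
def Adec (t : SchT) : Set (SchT × List SchT) :=
  {p | p ∈ Decomps t ∧ p.2.getLast? = some leafST}

theorem adec_finite (t : SchT) : (Adec t).Finite :=
  (decomps_finite t).subset fun p hp => hp.1

theorem ldash_eq (f g : SchT → ℚ) (t : SchT) :
    ldash f g t = ∑ p ∈ (adec_finite t).toFinset, f p.1 * (p.2.dropLast.map g).prod :=
  finsum_mem_eq_finite_toFinset_sum _ (adec_finite t)

/-- Multi-decompositions of a list of Schröder trees. -/
def MDec (us : List SchT) : Set (List SchT × List SchT) :=
  {c | leavesL (c.1.map Subtype.val) = c.2.length ∧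
    (graftL (c.1.map Subtype.val) (c.2.map Subtype.val)).1 = us.map Subtype.val}

theorem mdec_finite (us : List SchT) : (MDec us).Finite := by
  have hsub : MDec us ⊆
      (fun c : List SchT × List SchT => (c.1.map Subtype.val, c.2.map Subtype.val)) ⁻¹'
        {x | x ∈ decompsL (us.map Subtype.val)} := by
    rintro ⟨cs, l⟩ ⟨h1, h2⟩
    exact mem_decompsL (cs.map Subtype.val) (l.map Subtype.val) _ (by simpa using h1) h2
  refine Set.Finite.subset (Set.Finite.preimage ?_ (List.finite_toSet _)) hsub
  intro a _ b _ hab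
  obtain ⟨h1, h2⟩ := Prod.mk.injEq _ _ _ _ ▸ hab
  exact Prod.ext (SchT.list_injective h1) (SchT.list_injective h2)

theorem compG_eq (g h : SchT → ℚ) (u : SchT) :
    compG g h u = ∑ s ∈ (decomps_finite u).toFinset, g s.1 * (s.2.map h).prod :=
  finsum_mem_eq_finite_toFinset_sum _ (decomps_finite u)

theorem mdec_nil : MDec [] = {([], [])} := by
  ext ⟨cs, l⟩
  simp only [MDec, Set.mem_setOf_eq, Set.mem_singleton_iff, Prod.mk.injEq]
  constructor
  · rintro ⟨h1, h2⟩
    have hcs : cs = [] := by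
      have := length_graftL_fst (cs.map Subtype.val) (l.map Subtype.val)
      rw [h2] at this
      simpa using this.symm
    subst hcs
    simp only [List.map_nil, leavesL] at h1
    exact ⟨rfl, List.eq_nil_of_length_eq_zero h1.symm⟩
  · rintro ⟨rfl, rfl⟩
    simp [leavesL, graftL_nil]

/-- Product formula: the sum over multi-decompositions of a list of trees equals the
product of `compG g h` over the list. -/
theorem mdec_sum (g h : SchT → ℚ) : ∀ us : List SchT,
    (∑ᶠ c ∈ MDec us, (c.1.map g).prod * (c.2.map h).prod) = (us.map (compG g h)).prod
  | [] => by
      rw [mdec_nil, finsum_mem_singleton]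
      simp
  | u :: us => by
      rw [finsum_mem_eq_finite_toFinset_sum _ (mdec_finite (u :: us))]
      have IH := mdec_sum g h us
      rw [finsum_mem_eq_finite_toFinset_sum _ (mdec_finite us)] at IH
      rw [List.map_cons, List.prod_cons, ← IH, compG_eq, Finset.sum_mul_sum]
      rw [← Finset.sum_product']
      symm
      refine Finset.sum_nbij'
        (i := fun x : (SchT × List SchT) × (List SchT × List SchT) =>
          (x.1.1 :: x.2.1, x.1.2 ++ x.2.2))
        (j := fun y : List SchT × List SchT => ((y.1.headD leafST,
          y.2.take (leavesT (y.1.headD leafST).val)),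
          (y.1.tail, y.2.drop (leavesT (y.1.headD leafST).val))))
        ?_ ?_ ?_ ?_ ?_
      · -- hi : x ∈ product → i x ∈ MDec (u::us)
        rintro ⟨⟨s, b⟩, ⟨cs, l⟩⟩ hx
        simp only [Finset.mem_product, Set.Finite.mem_toFinset] at hx
        obtain ⟨⟨hb1, hb2⟩, ⟨hc1, hc2⟩⟩ := hx
        simp only [List.length_map] at hb1 hc1
        simp only [Set.Finite.mem_toFinset]
        constructor
        · simp only [List.map_cons, leavesL_cons, List.length_append]
          omega
        · rw [List.map_cons, graftL_cons, List.map_append,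
            graftT_exact s.val _ _ (by simpa using hb1.symm)]
          dsimp only
          rw [hb2, hc2, List.map_cons]
      · -- hj : y ∈ MDec (u::us) → j y ∈ product
        rintro ⟨cs, l⟩ hy
        simp only [Set.Finite.mem_toFinset] at hy
        obtain ⟨h1, h2⟩ := hy
        rcases cs with _ | ⟨c, cs⟩
        · exfalso
          have := length_graftL_fst ([] : List PTree) (l.map Subtype.val)
          rw [List.map_nil] at h2
          rw [h2] at this
          simp at this
        have hn : leavesT c.val + leavesL (cs.map Subtype.val) = l.length := by
          simpa [leavesL_cons] using h1
        have hsplit : l.map Subtype.val = (l.take (leavesT c.val)).map Subtype.val ++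
            (l.drop (leavesT c.val)).map Subtype.val := by
          rw [← List.map_append, List.take_append_drop]
        have htk : leavesT c.val = ((l.take (leavesT c.val)).map Subtype.val).length := by
          simp [List.length_take]; omega
        rw [List.map_cons, graftL_cons, hsplit,
          graftT_exact c.val _ _ htk] at h2
        dsimp only at h2
        rw [List.map_cons] at h2
        obtain ⟨e1, e2⟩ := List.cons.injEq _ _ _ _ ▸ h2
        simp only [Finset.mem_product, Set.Finite.mem_toFinset, List.headD_cons,
          List.tail_cons]
        constructor
        · exact ⟨htk.symm, by simpa using e1⟩
        · refine ⟨?_, by simpa using e2⟩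
          simp only [List.length_map, List.length_drop]
          omega
      · -- left_inv : j (i x) = x
        rintro ⟨⟨s, b⟩, ⟨cs, l⟩⟩ hx
        simp only [Finset.mem_product, Set.Finite.mem_toFinset] at hx
        obtain ⟨⟨hb1, hb2⟩, _⟩ := hx
        have hlen : b.length = leavesT s.val := by simpa using hb1
        simp [List.take_left' hlen, List.drop_left' hlen]
      · -- right_inv : i (j y) = y
        rintro ⟨cs, l⟩ hy
        simp only [Set.Finite.mem_toFinset] at hy
        obtain ⟨h1, h2⟩ := hy
        rcases cs with _ | ⟨c, cs⟩
        · exfalso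
          have := length_graftL_fst ([] : List PTree) (l.map Subtype.val)
          rw [List.map_nil] at h2
          rw [h2] at this
          simp at this
        simp [List.take_append_drop]
      · -- values
        rintro ⟨⟨s, b⟩, ⟨cs, l⟩⟩ _
        simp only [List.map_cons, List.prod_cons, List.map_append, List.prod_append]
        ring

theorem eG_of_ne (s : SchT) (h : s ≠ leafST) : eG s = 0 := by
  obtain ⟨⟨ts⟩, hr⟩ := s
  cases ts with
  | nil => exact absurd (Subtype.ext rfl) h
  | cons a l => rfl

theorem adec_last {t : SchT} {p : SchT × List SchT} (hp : p ∈ Adec t) :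
    p.2 = p.2.dropLast ++ [leafST] :=
  (List.dropLast_append_getLast? _ (Option.mem_def.mpr hp.2)).symm

theorem adec_len {t : SchT} {p : SchT × List SchT} (hp : p ∈ Adec t) :
    p.2.length = leavesT p.1.val := by
  have := hp.1.1
  simpa using this

/-- `ldash f eG = f`. -/
theorem ldash_eG (f : SchT → ℚ) (t : SchT) : ldash f eG t = f t := by
  rw [ldash_eq]
  have hn : 1 ≤ leavesT t.val := leavesT_pos t.val
  set p₀ : SchT × List SchT := (t, List.replicate (leavesT t.val) leafST) with hp₀
  have hmem : p₀ ∈ (adec_finite t).toFinset := by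
    rw [Set.Finite.mem_toFinset]
    refine ⟨⟨?_, ?_⟩, ?_⟩
    · simp [p₀]
    · have : (List.replicate (leavesT t.val) leafST).map Subtype.val =
          List.replicate (leavesT t.val) (.node []) := by simp [leafST]
      rw [hp₀]
      dsimp only
      rw [this, graftT_id t.val]
    · obtain ⟨m, hm⟩ : ∃ m, leavesT t.val = m + 1 := ⟨leavesT t.val - 1, by omega⟩
      rw [hp₀]
      dsimp only
      rw [hm, List.replicate_succ', List.getLast?_concat]
  rw [Finset.sum_eq_single_of_mem p₀ hmem]
  · have : ∀ x ∈ p₀.2.dropLast.map eG, x = 1 := by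
      intro x hx
      obtain ⟨s, hs, rfl⟩ := List.mem_map.1 hx
      have : s = leafST :=
        List.eq_of_mem_replicate (List.mem_of_mem_dropLast hs)
      rw [this]; rfl
    rw [List.prod_eq_one this, mul_one]
  · intro p hp hne
    rw [Set.Finite.mem_toFinset] at hp
    by_cases hall : ∀ s ∈ p.2.dropLast, s = leafST
    · exfalso
      apply hne
      have hfull : ∀ s ∈ p.2, s = leafST := by
        intro s hs
        rw [adec_last hp] at hs
        rcases List.mem_append.1 hs with hs | hs
        · exact hall s hs
        · simpa using hs
      have hrep : p.2 = List.replicate p.2.length leafST :=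
        List.eq_replicate_of_mem hfull
      have hlen : p.2.length = leavesT p.1.val := adec_len hp
      have hgr : (graftT p.1.val (p.2.map Subtype.val)).1 = p.1.val := by
        rw [hrep, hlen]
        have : (List.replicate (leavesT p.1.val) leafST).map Subtype.val =
            List.replicate (leavesT p.1.val) (.node []) := by simp [leafST]
        rw [this, graftT_id p.1.val]
      have h1 : p.1 = t := Subtype.ext (hgr.symm.trans hp.1.2)
      have h2 : p.2 = p₀.2 := by
        rw [hrep, hlen, h1]
      exact Prod.ext h1 h2
    · push_neg at hall
      obtain ⟨s, hs, hsne⟩ := hall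
      have : (0:ℚ) ∈ p.2.dropLast.map eG :=
        List.mem_map.2 ⟨s, hs, eG_of_ne s hsne⟩
      rw [List.prod_eq_zero this, mul_zero]

open Classical in
noncomputable def liftT (x : PTree) : SchT := if h : Reduced x then ⟨x, h⟩ else leafST

noncomputable def liftLL (l : List PTree) : List SchT := l.map liftT

theorem liftT_val {x : PTree} (h : Reduced x) : (liftT x).val = x := by
  rw [liftT, dif_pos h]

theorem liftT_val_eq (s : SchT) : liftT s.val = s := Subtype.ext (liftT_val s.2)

theorem liftLL_map_val {l : List PTree} (h : ∀ s ∈ l, Reduced s) :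
    (liftLL l).map Subtype.val = l := by
  rw [liftLL, List.map_map]
  conv_rhs => rw [← List.map_id l]
  exact List.map_congr_left fun x hx => liftT_val (h x hx)

theorem liftLL_of_val (L : List SchT) : liftLL (L.map Subtype.val) = L := by
  rw [liftLL, List.map_map]
  conv_rhs => rw [← List.map_id L]
  exact List.map_congr_left fun x _ => liftT_val_eq x

theorem mem_map_val_reduced (L : List SchT) : ∀ s ∈ L.map Subtype.val, Reduced s := by
  intro s hs
  obtain ⟨a, _, rfl⟩ := List.mem_map.1 hs
  exact a.2

theorem getLast?_of_val {L : List SchT} (h : (L.map Subtype.val).getLast? = some (.node [])) :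
    L.getLast? = some leafST := by
  rw [List.getLast?_map] at h
  rcases hL : L.getLast? with _ | x
  · rw [hL] at h; simp at h
  · rw [hL] at h
    simp only [Option.map_some] at h
    have : x = leafST := Subtype.ext (by injection h)
    rw [this]

theorem graft_split (qs' ps' : List PTree) (hp : leavesL qs' = ps'.length) :
    (graftL (qs' ++ [.node []]) (ps' ++ [.node []])).1
      = (graftL qs' ps').1 ++ [.node []] := by
  rw [graftL_append_fst, graftL_exact qs' ps' [.node []] hp]
  dsimp only
  rw [graftL_cons, graftT_nil]
  simp [graftL_nil]

theorem leavesL_leaf_singleton : leavesL [.node []] = 1 := by simp [leavesL, leavesT]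

theorem map_val_concat_leaf (L : List SchT) :
    (L ++ [leafST]).map Subtype.val = L.map Subtype.val ++ [.node []] := by
  simp [leafST]

theorem forward_mem {t : SchT} {p q : SchT × List SchT} (hp : p ∈ Adec t) (hq : q ∈ Adec p.1) :
    ((q.1, liftLL (graftL (q.2.map Subtype.val) (p.2.map Subtype.val)).1) ∈ Adec t) ∧
    ((q.2.dropLast, p.2.dropLast) ∈
      MDec (liftLL (graftL (q.2.map Subtype.val) (p.2.map Subtype.val)).1).dropLast) := by
  set qsv := q.2.map Subtype.val with hqsv
  set psv := p.2.map Subtype.val with hpsv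
  set rs := (graftL qsv psv).1 with hrs
  have hred : ∀ s ∈ rs, Reduced s :=
    (reduced_graftL qsv psv (mem_map_val_reduced q.2) (mem_map_val_reduced p.2)).1
  have hRS : (liftLL rs).map Subtype.val = rs := liftLL_map_val hred
  have hlen_q : qsv.length = leavesT q.1.val := hq.1.1
  have hgr_q : (graftT q.1.val qsv).1 = p.1.val := hq.1.2
  have hlen_p : psv.length = leavesT p.1.val := hp.1.1
  have hgr_p : (graftT p.1.val psv).1 = t.val := hp.1.2
  have assoc := graftT_assoc q.1.val qsv psv hlen_q.symm
  have key1 : (graftT q.1.val rs).1 = t.val := by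
    have := congrArg Prod.fst assoc
    dsimp only at this
    rw [hgr_q, hgr_p] at this
    exact this.symm
  set qs' := q.2.dropLast.map Subtype.val with hqs'
  set ps' := p.2.dropLast.map Subtype.val with hps'
  have hq2 : qsv = qs' ++ [.node []] := by
    rw [hqsv, hqs']
    conv_lhs => rw [adec_last hq]
    exact map_val_concat_leaf _
  have hp2 : psv = ps' ++ [.node []] := by
    rw [hpsv, hps']
    conv_lhs => rw [adec_last hp]
    exact map_val_concat_leaf _
  have hleaves : leavesT p.1.val = leavesL qsv := by
    rw [← hgr_q]
    exact leavesT_graftT q.1.val qsv hlen_q.symm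
  have hsz : leavesL qs' = ps'.length := by
    have l1 : leavesL qsv = leavesL qs' + 1 := by
      rw [hq2, leavesL_append, leavesL_leaf_singleton]
    have l2 : psv.length = ps'.length + 1 := by rw [hp2]; simp
    omega
  have hsplit : rs = (graftL qs' ps').1 ++ [.node []] := by
    rw [hrs, hq2, hp2]
    exact graft_split qs' ps' hsz
  refine ⟨⟨⟨?_, ?_⟩, ?_⟩, ?_, ?_⟩
  · rw [hRS, hrs, length_graftL_fst, hlen_q]
  · rw [hRS]; exact key1
  · apply getLast?_of_val
    rw [hRS, hsplit]
    exact List.getLast?_concat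
  · -- MDec length condition
    show leavesL qs' = p.2.dropLast.length
    rw [hsz, hps']
    simp
  · -- MDec graft condition
    show (graftL qs' ps').1 = ((liftLL rs).dropLast).map Subtype.val
    rw [List.map_dropLast, hRS, hsplit, List.dropLast_concat]

theorem backward_mem {t : SchT} {r : SchT × List SchT} {c : List SchT × List SchT}
    (hr : r ∈ Adec t) (hc : c ∈ MDec r.2.dropLast) :
    ((r.1, c.1 ++ [leafST]) ∈
      Adec (liftT (graftT r.1.val ((c.1.map Subtype.val) ++ [.node []])).1)) ∧
    ((liftT (graftT r.1.val ((c.1.map Subtype.val) ++ [.node []])).1, c.2 ++ [leafST]) ∈ Adec t)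
    := by
  set csv := c.1.map Subtype.val with hcsv
  set lv := c.2.map Subtype.val with hlv
  set P := (graftT r.1.val (csv ++ [.node []])).1 with hP
  have hlen_r : (r.2.map Subtype.val).length = leavesT r.1.val := hr.1.1
  have hlen_r' : r.2.length = leavesT r.1.val := by simpa using hlen_r
  have hpos : 1 ≤ r.2.length := hlen_r' ▸ leavesT_pos r.1.val
  have hr2 : r.2.map Subtype.val = (r.2.dropLast.map Subtype.val) ++ [.node []] := by
    conv_lhs => rw [adec_last hr]
    exact map_val_concat_leaf _
  have hcs_len : c.1.length = r.2.dropLast.length := by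
    have := congrArg List.length hc.2
    rw [length_graftL_fst] at this
    simpa [hcsv] using this
  have hcsv_len : leavesT r.1.val = (csv ++ [PTree.node []]).length := by
    rw [hcsv]
    simp only [List.length_append, List.length_map, List.length_cons, List.length_nil]
    rw [hcs_len]
    simp only [List.length_dropLast]
    omega
  have hred_list : ∀ s ∈ csv ++ [.node []], Reduced s := by
    intro s hs
    rcases List.mem_append.1 hs with hs | hs
    · exact mem_map_val_reduced c.1 s hs
    · simp only [List.mem_singleton] at hs
      rw [hs]; exact Reduced.leaf
  have hPred : Reduced P := (reduced_graftT r.1.val _ r.1.2 hred_list).1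
  have hPval : (liftT P).val = P := liftT_val hPred
  have hsz : leavesL csv = lv.length := by
    rw [hlv]
    simpa [hcsv] using hc.1
  have hsplit : (graftL (csv ++ [.node []]) (lv ++ [.node []])).1 = r.2.map Subtype.val := by
    rw [graft_split csv lv hsz, hc.2, ← hr2]
  have hleavesP : leavesT P = lv.length + 1 := by
    rw [hP, leavesT_graftT _ _ hcsv_len, leavesL_append, leavesL_leaf_singleton, hsz]
  refine ⟨⟨⟨?_, ?_⟩, ?_⟩, ⟨?_, ?_⟩, ?_⟩
  · dsimp only
    simp only [List.length_map, List.length_append, List.length_cons, List.length_nil]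
    rw [hcs_len]
    simp only [List.length_dropLast]
    omega
  · dsimp only
    rw [map_val_concat_leaf, ← hcsv, hPval]
  · exact List.getLast?_concat
  · dsimp only
    rw [hPval, map_val_concat_leaf, ← hlv]
    simp [hleavesP]
  · dsimp only
    rw [hPval, map_val_concat_leaf, ← hlv]
    have assoc := graftT_assoc r.1.val (csv ++ [.node []]) (lv ++ [.node []]) hcsv_len
    have := congrArg Prod.fst assoc
    dsimp only at this
    rw [← hP] at this
    rw [this, hsplit]
    exact hr.1.2
  · exact List.getLast?_concat

theorem forward_backward {t : SchT} {p q : SchT × List SchT}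
    (hp : p ∈ Adec t) (hq : q ∈ Adec p.1) :
    liftT (graftT q.1.val ((q.2.dropLast.map Subtype.val) ++ [PTree.node []])).1 = p.1 := by
  have h1 : (q.2.dropLast.map Subtype.val) ++ [PTree.node []] = q.2.map Subtype.val := by
    conv_rhs => rw [adec_last hq]
    exact (map_val_concat_leaf _).symm
  rw [h1, hq.1.2]
  exact liftT_val_eq p.1

theorem backward_forward {t : SchT} {r : SchT × List SchT} {c : List SchT × List SchT}
    (hr : r ∈ Adec t) (hc : c ∈ MDec r.2.dropLast) :
    liftLL (graftL ((c.1 ++ [leafST]).map Subtype.val)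
      ((c.2 ++ [leafST]).map Subtype.val)).1 = r.2 := by
  have hsz : leavesL (c.1.map Subtype.val) = (c.2.map Subtype.val).length := by
    simpa using hc.1
  rw [map_val_concat_leaf, map_val_concat_leaf, graft_split _ _ hsz, hc.2]
  have : (r.2.dropLast.map Subtype.val) ++ [PTree.node []] = r.2.map Subtype.val := by
    conv_rhs => rw [adec_last hr]
    exact (map_val_concat_leaf _).symm
  rw [this, liftLL_of_val]

/-- The key associativity-type identity: `(f⊣g)⊣h = f⊣(g∘h)`. -/
theorem sigma_mk_eq {A B : Type*} {a a' : A} {b b' : B} (h1 : a = a') (h2 : b = b') :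
    (⟨a, b⟩ : Σ _ : A, B) = ⟨a', b'⟩ := by subst h1; subst h2; rfl

theorem ldash_ldash (f g h : SchT → ℚ) (t : SchT) :
    ldash (ldash f g) h t = ldash f (compG g h) t := by
  rw [ldash_eq, ldash_eq]
  have lhs_eq : ∑ p ∈ (adec_finite t).toFinset, ldash f g p.1 * (p.2.dropLast.map h).prod
      = ∑ x ∈ (adec_finite t).toFinset.sigma (fun p => (adec_finite p.1).toFinset),
          f x.2.1 * (x.2.2.dropLast.map g).prod * (x.1.2.dropLast.map h).prod := by
    rw [Finset.sum_sigma]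
    apply Finset.sum_congr rfl
    intro p _
    rw [ldash_eq, Finset.sum_mul]
  have rhs_eq : ∑ r ∈ (adec_finite t).toFinset, f r.1 * (r.2.dropLast.map (compG g h)).prod
      = ∑ y ∈ (adec_finite t).toFinset.sigma (fun r => (mdec_finite r.2.dropLast).toFinset),
          f y.1.1 * ((y.2.1.map g).prod * (y.2.2.map h).prod) := by
    rw [Finset.sum_sigma]
    apply Finset.sum_congr rfl
    intro r _
    rw [← mdec_sum g h r.2.dropLast,
      finsum_mem_eq_finite_toFinset_sum _ (mdec_finite r.2.dropLast), Finset.mul_sum]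
  rw [lhs_eq, rhs_eq]
  refine Finset.sum_nbij'
    (i := fun x : Σ _ : SchT × List SchT, SchT × List SchT =>
      (⟨(x.2.1, liftLL (graftL (x.2.2.map Subtype.val) (x.1.2.map Subtype.val)).1),
        (x.2.2.dropLast, x.1.2.dropLast)⟩ : Σ _ : SchT × List SchT, List SchT × List SchT))
    (j := fun y : Σ _ : SchT × List SchT, List SchT × List SchT =>
      (⟨(liftT (graftT y.1.1.val ((y.2.1.map Subtype.val) ++ [PTree.node []])).1,
        y.2.2 ++ [leafST]), (y.1.1, y.2.1 ++ [leafST])⟩ : Σ _ : SchT × List SchT, SchT × List SchT))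
    ?_ ?_ ?_ ?_ ?_
  · rintro ⟨p, q⟩ hx
    rw [Finset.mem_sigma] at hx
    obtain ⟨hp, hq⟩ := hx
    rw [Set.Finite.mem_toFinset] at hp hq
    obtain ⟨m1, m2⟩ := forward_mem hp hq
    rw [Finset.mem_sigma]
    exact ⟨Set.Finite.mem_toFinset _ |>.2 m1, Set.Finite.mem_toFinset _ |>.2 m2⟩
  · rintro ⟨r, c⟩ hy
    rw [Finset.mem_sigma] at hy
    obtain ⟨hr, hc⟩ := hy
    rw [Set.Finite.mem_toFinset] at hr hc
    obtain ⟨m1, m2⟩ := backward_mem hr hc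
    rw [Finset.mem_sigma]
    exact ⟨Set.Finite.mem_toFinset _ |>.2 m2, Set.Finite.mem_toFinset _ |>.2 m1⟩
  · rintro ⟨p, q⟩ hx
    rw [Finset.mem_sigma] at hx
    obtain ⟨hp, hq⟩ := hx
    rw [Set.Finite.mem_toFinset] at hp hq
    exact sigma_mk_eq (Prod.ext (forward_backward hp hq) (adec_last hp).symm)
      (Prod.ext rfl (adec_last hq).symm)
  · rintro ⟨r, c⟩ hy
    rw [Finset.mem_sigma] at hy
    obtain ⟨hr, hc⟩ := hy
    rw [Set.Finite.mem_toFinset] at hr hc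
    exact sigma_mk_eq (Prod.ext rfl (backward_forward hr hc))
      (Prod.ext (by dsimp only; exact List.dropLast_concat) (by dsimp only; exact List.dropLast_concat))
  · rintro ⟨p, q⟩ _
    dsimp only
    ring

/-- if `f∘g = g∘f = e` in the group of the Schröder operad, then
`f = (f⊣g)⊣f`; that is, the operadic R-transform `k = f⊣f^{∘−1}` of `f`
satisfies `f = k⊣f`. -/

theorem stmt10 (f g : SchT → ℚ) (hf : f leafST = 1) (hg : g leafST = 1)
    (h1 : compG f g = eG) (h2 : compG g f = eG) :
    f = ldash (ldash f g) f := by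
  funext t
  symm
  rw [ldash_ldash f g f t, h2]
  exact ldash_eG f t
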